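/- Let ε ≥ 0 and ρ_A a density operator on A. Then there exists a positive semidefinite operator Π_A ≤ Id_A, diagonal in an eigenbasis of ρ_A, such that H₀^ε(A)_ρ ≥ H₀(A)_{Π ρ Π} and P(Π_A ρ_A Π_A, ρ_A) ≤ sqrt(4ε), i.e., the zero-Rényi entropy can be smoothed by applying a projection-like compression while staying sqrt(4ε)-close in purified distance. -/

import Mathlib

open scoped Classical Kronecker ComplexOrder

noncomputable section

namespace QIT

variable {ι κ γ : Type*} [Fintype ι] [DecidableEq ι] [Fintype κ] [DecidableEq κ]
  [Fintype γ] [DecidableEq γ]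

/-- The old Mathlib `Matrix.PosSemidef.sqrt`, spelled out (removed from Mathlib). -/
def psdSqrt {A : Matrix ι ι ℂ} (hA : A.PosSemidef) : Matrix ι ι ℂ :=
  (hA.1.eigenvectorUnitary : Matrix ι ι ℂ) *
    Matrix.diagonal (((↑) : ℝ → ℂ) ∘ Real.sqrt ∘ hA.1.eigenvalues) *
    (star (hA.1.eigenvectorUnitary : Matrix ι ι ℂ))

/-- Trace norm `‖A‖₁ = tr √(AᴴA)`. -/
def traceNorm (A : Matrix ι ι ℂ) : ℝ :=
  (psdSqrt (Matrix.posSemidef_conjTranspose_mul_self A)).trace.re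

/-- Matrix square root (of a PSD matrix; junk value `0` otherwise). -/
def msqrt (A : Matrix ι ι ℂ) : Matrix ι ι ℂ :=
  if h : A.PosSemidef then psdSqrt h else 0

/-- Fidelity `F(ρ,σ) = ‖√ρ√σ‖₁`. -/
def fidelity (ρ σ : Matrix ι ι ℂ) : ℝ := traceNorm (msqrt ρ * msqrt σ)

/-- Generalized fidelity. -/
def genFid (ρ σ : Matrix ι ι ℂ) : ℝ :=
  fidelity ρ σ + Real.sqrt ((1 - ρ.trace.re) * (1 - σ.trace.re))

/-- Purified distance. -/
def purifiedDist (ρ σ : Matrix ι ι ℂ) : ℝ := Real.sqrt (1 - genFid ρ σ ^ 2)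

def IsSubnormalized (ρ : Matrix ι ι ℂ) : Prop := ρ.PosSemidef ∧ ρ.trace.re ≤ 1

def IsDensity (ρ : Matrix ι ι ℂ) : Prop := ρ.PosSemidef ∧ ρ.trace = 1

/-- Max-relative entropy `D_max(ρ‖σ) = inf {λ : 2^λ σ ≥ ρ}`. -/
def Dmax (ρ σ : Matrix ι ι ℂ) : ℝ :=
  sInf {l : ℝ | ((((2:ℝ) ^ l : ℝ) : ℂ) • σ - ρ).PosSemidef}

/-- Partial trace over the first factor. -/
def ptrace₁ (ρ : Matrix (ι × κ) (ι × κ) ℂ) : Matrix κ κ ℂ :=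
  Matrix.of fun (b b' : κ) => ∑ a, ρ (a, b) (a, b')

/-- Partial trace over the second factor. -/
def ptrace₂ (ρ : Matrix (ι × κ) (ι × κ) ℂ) : Matrix ι ι ℂ :=
  Matrix.of fun (a a' : ι) => ∑ b, ρ (a, b) (a', b)

/-- Max-information `I_max(A:B)_ρ = inf_{σ_B} D_max(ρ_{AB}‖ρ_A ⊗ σ_B)`. -/
def Imax (ρ : Matrix (ι × κ) (ι × κ) ℂ) : ℝ :=
  sInf {x : ℝ | ∃ σ : Matrix κ κ ℂ, IsDensity σ ∧ x = Dmax ρ (ptrace₂ ρ ⊗ₖ σ)}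

/-- Conditional min-entropy `H_min(A|B)_ρ = −inf_{σ_B} D_max(ρ_{AB}‖Id_A ⊗ σ_B)`. -/
def HminCond (ρ : Matrix (ι × κ) (ι × κ) ℂ) : ℝ :=
  - sInf {x : ℝ | ∃ σ : Matrix κ κ ℂ, IsDensity σ ∧ x = Dmax ρ ((1 : Matrix ι ι ℂ) ⊗ₖ σ)}

/-- Largest eigenvalue (operator norm for PSD matrices). -/
def maxEig (ρ : Matrix ι ι ℂ) : ℝ :=
  if h : ρ.IsHermitian then ⨆ i, h.eigenvalues i else 0

/-- Zero-Rényi entropy `H₀ = log rank`. -/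
def H0 (ρ : Matrix ι ι ℂ) : ℝ := Real.logb 2 ρ.rank

/-- Min-entropy `H_min = −log ‖ρ‖_∞`. -/
def Hmin (ρ : Matrix ι ι ℂ) : ℝ := - Real.logb 2 (maxEig ρ)

/-- Max-entropy `H_max = 2 log tr √ρ`. -/
def Hmax (ρ : Matrix ι ι ℂ) : ℝ := 2 * Real.logb 2 (msqrt ρ).trace.re

def smoothH0 (ε : ℝ) (ρ : Matrix ι ι ℂ) : ℝ :=
  sInf {x : ℝ | ∃ σ : Matrix ι ι ℂ, IsSubnormalized σ ∧ purifiedDist σ ρ ≤ ε ∧ x = H0 σ}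

def smoothHmax (ε : ℝ) (ρ : Matrix ι ι ℂ) : ℝ :=
  sInf {x : ℝ | ∃ σ : Matrix ι ι ℂ, IsSubnormalized σ ∧ purifiedDist σ ρ ≤ ε ∧ x = Hmax σ}

def smoothImax (ε : ℝ) (ρ : Matrix (ι × κ) (ι × κ) ℂ) : ℝ :=
  sInf {x : ℝ | ∃ σ : Matrix (ι × κ) (ι × κ) ℂ,
    IsSubnormalized σ ∧ purifiedDist σ ρ ≤ ε ∧ x = Imax σ}


section Aux

open Matrix

variable {ι : Type*} [Fintype ι] [DecidableEq ι]

section SqrtAux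

open scoped MatrixOrder

lemma psdSqrt_eq_cfc_sqrt {A : Matrix ι ι ℂ} (hA : A.PosSemidef) : psdSqrt hA = CFC.sqrt A := by
  rw [CFC.sqrt_eq_cfc, cfc_nnreal_eq_real _ A hA.nonneg, hA.1.cfc_eq, psdSqrt,
    Matrix.IsHermitian.cfc, Unitary.conjStarAlgAut_apply]
  congr 3
  funext i
  simp [Real.coe_sqrt, Real.coe_toNNReal', hA.eigenvalues_nonneg i]

lemma psdSqrt_psd {A : Matrix ι ι ℂ} (hA : A.PosSemidef) : (psdSqrt hA).PosSemidef := by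
  rw [psdSqrt_eq_cfc_sqrt]; exact (CFC.sqrt_nonneg A).posSemidef

lemma psdSqrt_mul_self {A : Matrix ι ι ℂ} (hA : A.PosSemidef) : psdSqrt hA * psdSqrt hA = A := by
  rw [psdSqrt_eq_cfc_sqrt]; exact CFC.sqrt_mul_sqrt_self A hA.nonneg

lemma eq_psdSqrt_of_sq_eq {A B : Matrix ι ι ℂ} (hB : B.PosSemidef) (hA : A.PosSemidef)
    (h : B ^ 2 = A) : B = psdSqrt hA := by
  rw [psdSqrt_eq_cfc_sqrt]; subst h; exact (CFC.sqrt_sq B hB.nonneg).symm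

end SqrtAux

/-! ### Generic positivity facts -/

lemma psd_diag_nonneg {A : Matrix ι ι ℂ} (hA : A.PosSemidef) (i : ι) : 0 ≤ A i i := by
  exact hA.diag_nonneg

lemma psd_trace_re_nonneg {A : Matrix ι ι ℂ} (hA : A.PosSemidef) : 0 ≤ A.trace.re := by
  rw [Matrix.trace, Complex.re_sum]
  exact Finset.sum_nonneg fun i _ => (Complex.nonneg_iff.mp (psd_diag_nonneg hA i)).1

lemma psd_mul_trace_re_nonneg {A B : Matrix ι ι ℂ} (hA : A.PosSemidef) (hB : B.PosSemidef) :
    0 ≤ (A * B).trace.re := by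
  have h2 : (A * B).trace = (psdSqrt hA * B * psdSqrt hA).trace := by
    conv_lhs => rw [← psdSqrt_mul_self hA, mul_assoc, Matrix.trace_mul_comm]
  rw [h2]
  have hh : psdSqrt hA * B * psdSqrt hA = psdSqrt hA * B * (psdSqrt hA)ᴴ := by
    rw [(psdSqrt_psd hA).1]
  exact psd_trace_re_nonneg (by rw [hh]; exact hB.mul_mul_conjTranspose_same (psdSqrt hA))

/-- Cauchy–Schwarz for the complex dot product, real-part form. -/
lemma dot_cs (x y : ι → ℂ) : (dotProduct (star x) y).re ≤
    Real.sqrt (dotProduct (star x) x).re * Real.sqrt (dotProduct (star y) y).re := by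
  have hx : (dotProduct (star x) x).re = ∑ i, ‖x i‖ ^ 2 := by
    rw [dotProduct, Complex.re_sum]
    congr 1; ext i
    simp [Pi.star_apply, Complex.mul_re, Complex.sq_norm, Complex.normSq_apply]
  have hy : (dotProduct (star y) y).re = ∑ i, ‖y i‖ ^ 2 := by
    rw [dotProduct, Complex.re_sum]
    congr 1; ext i
    simp [Pi.star_apply, Complex.mul_re, Complex.sq_norm, Complex.normSq_apply]
  rw [hx, hy]
  calc (dotProduct (star x) y).re ≤ ∑ i, ‖x i‖ * ‖y i‖ := by
        rw [dotProduct, Complex.re_sum]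
        refine Finset.sum_le_sum fun i _ => ?_
        calc ((star x i) * y i).re ≤ ‖(star x i) * y i‖ := Complex.re_le_norm _
          _ = ‖x i‖ * ‖y i‖ := by
              simp [Pi.star_apply, _root_.map_mul]
    _ ≤ _ := Real.sum_mul_le_sqrt_mul_sqrt _ _ _

/-- A hermitian idempotent is a contraction: `1 - P` is PSD. -/
lemma one_sub_proj_psd {P : Matrix ι ι ℂ} (hP : P.PosSemidef) (hP2 : P * P = P) :
    ((1 : Matrix ι ι ℂ) - P).PosSemidef := by
  refine Matrix.PosSemidef.of_dotProduct_mulVec_nonneg ?_ ?_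
  · exact Matrix.IsHermitian.sub (Matrix.isHermitian_one) hP.1
  · intro x
    have key : dotProduct (star x) ((1 - P).mulVec x)
        = dotProduct (star x) x - dotProduct (star x) (P.mulVec x) := by
      rw [Matrix.sub_mulVec, dotProduct_sub, Matrix.one_mulVec]
    rw [key]
    set y := P.mulVec x with hy
    have haa : dotProduct (star x) y = dotProduct (star y) y := by
      rw [hy, Matrix.star_mulVec, ← dotProduct_mulVec, Matrix.mulVec_mulVec, hP.1, hP2]
    have hyy := dotProduct_star_self_nonneg y
    have hxx := dotProduct_star_self_nonneg x
    have hre : (dotProduct (star y) y).re ≤ (dotProduct (star x) x).re := by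
      have h1 := dot_cs x y
      rw [haa] at h1
      set a := (dotProduct (star y) y).re
      set b := (dotProduct (star x) x).re
      have ha : 0 ≤ a := (Complex.nonneg_iff.mp hyy).1
      have hb : 0 ≤ b := (Complex.nonneg_iff.mp hxx).1
      nlinarith [Real.sq_sqrt ha, Real.sq_sqrt hb, Real.sqrt_nonneg a, Real.sqrt_nonneg b,
        sq_nonneg (Real.sqrt a - Real.sqrt b), sq_nonneg (Real.sqrt a + Real.sqrt b)]
    rw [haa, Complex.nonneg_iff]
    refine ⟨by simpa using hre, ?_⟩
    have h1 := (Complex.nonneg_iff.mp hyy).2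
    have h2 := (Complex.nonneg_iff.mp hxx).2
    simp [Complex.sub_im, ← h1, ← h2]

/-- Cauchy–Schwarz for the Frobenius inner product (real part of trace). -/
lemma trace_cs (A B : Matrix ι ι ℂ) : ((Aᴴ * B).trace).re ≤
    Real.sqrt ((Aᴴ * A).trace).re * Real.sqrt ((Bᴴ * B).trace).re := by
  have key : ∀ (M N : Matrix ι ι ℂ), (Mᴴ * N).trace
      = dotProduct (star (fun p : ι × ι => M p.1 p.2)) (fun p : ι × ι => N p.1 p.2) := by
    intro M N
    simp only [Matrix.trace, Matrix.diag_apply, Matrix.mul_apply, Matrix.conjTranspose_apply,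
      dotProduct, Pi.star_apply, Fintype.sum_prod_type]
    rw [Finset.sum_comm]
  rw [key A B, key A A, key B B]
  exact dot_cs _ _

/-! ### `msqrt` facts -/

lemma msqrt_eq {A B : Matrix ι ι ℂ} (hA : A.PosSemidef) (hB : B.PosSemidef)
    (h : B ^ 2 = A) : msqrt A = B := by
  rw [msqrt, dif_pos hA]
  exact (eq_psdSqrt_of_sq_eq hB hA h).symm

lemma msqrt_psd {A : Matrix ι ι ℂ} (hA : A.PosSemidef) : (msqrt A).PosSemidef := by
  rw [msqrt, dif_pos hA]; exact psdSqrt_psd hA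

lemma msqrt_mul_self {A : Matrix ι ι ℂ} (hA : A.PosSemidef) : msqrt A * msqrt A = A := by
  rw [msqrt, dif_pos hA]; exact psdSqrt_mul_self hA

lemma traceNorm_psd_eq {A : Matrix ι ι ℂ} (hA : A.PosSemidef) : traceNorm A = A.trace.re := by
  rw [traceNorm]
  have : psdSqrt (Matrix.posSemidef_conjTranspose_mul_self A) = A := by
    refine ((eq_psdSqrt_of_sq_eq hA (Matrix.posSemidef_conjTranspose_mul_self A)) ?_).symm
    rw [pow_two, hA.1]
  rw [this]

lemma traceNorm_nonneg (A : Matrix ι ι ℂ) : 0 ≤ traceNorm A :=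
  psd_trace_re_nonneg (psdSqrt_psd (Matrix.posSemidef_conjTranspose_mul_self A))

lemma fidelity_nonneg (A B : Matrix ι ι ℂ) : 0 ≤ fidelity A B := traceNorm_nonneg _

/-! ### Unitary conjugation of diagonal matrices -/

/-- Conjugation of a real diagonal matrix by `U`. -/
def conjD (U : Matrix ι ι ℂ) (f : ι → ℝ) : Matrix ι ι ℂ :=
  U * Matrix.diagonal (fun i => (f i : ℂ)) * star U

section conjD
variable {U : Matrix ι ι ℂ} (f g : ι → ℝ)

lemma conjD_mul (hU : U ∈ Matrix.unitaryGroup ι ℂ) : conjD U f * conjD U g = conjD U (f * g) := by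
  have h : star U * U = 1 := Matrix.mem_unitaryGroup_iff'.mp hU
  simp only [conjD, Matrix.mul_assoc]
  rw [← Matrix.mul_assoc (star U) U, h, Matrix.one_mul,
    ← Matrix.mul_assoc (Matrix.diagonal _) (Matrix.diagonal _), Matrix.diagonal_mul_diagonal]
  norm_num

lemma conjD_herm : (conjD U f).IsHermitian := by
  unfold conjD
  rw [Matrix.IsHermitian, Matrix.conjTranspose_mul, Matrix.conjTranspose_mul,
    Matrix.star_eq_conjTranspose U, Matrix.conjTranspose_conjTranspose, Matrix.mul_assoc,
    Matrix.diagonal_conjTranspose]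
  have hd : Matrix.diagonal (star fun i => ((f i : ℝ) : ℂ))
      = Matrix.diagonal (fun i => ((f i : ℝ) : ℂ)) :=
    congrArg Matrix.diagonal (funext fun i => Complex.conj_ofReal _)
  rw [hd]

lemma conjD_psd (hf : ∀ i, 0 ≤ f i) : (conjD U f).PosSemidef := by
  have hd : (Matrix.diagonal (fun i => ((f i : ℝ) : ℂ))).PosSemidef :=
    Matrix.posSemidef_diagonal_iff.mpr fun i => by
      simpa using Complex.zero_le_real.mpr (hf i)
  have := hd.mul_mul_conjTranspose_same U
  rwa [← Matrix.star_eq_conjTranspose] at this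

lemma conjD_trace (hU : U ∈ Matrix.unitaryGroup ι ℂ) : (conjD U f).trace = ∑ i, (f i : ℂ) := by
  have h : star U * U = 1 := Matrix.mem_unitaryGroup_iff'.mp hU
  rw [conjD, Matrix.trace_mul_cycle, h, Matrix.one_mul, Matrix.trace_diagonal]

lemma conjD_trace_re (hU : U ∈ Matrix.unitaryGroup ι ℂ) : (conjD U f).trace.re = ∑ i, f i := by
  rw [conjD_trace _ hU, Complex.re_sum]
  simp

lemma conjD_one (hU : U ∈ Matrix.unitaryGroup ι ℂ) : conjD U (fun _ => 1) = 1 := by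
  have h : U * star U = 1 := Matrix.mem_unitaryGroup_iff.mp hU
  simp [conjD, Matrix.diagonal_one, h]

lemma conjD_sub : conjD U f - conjD U g = conjD U (f - g) := by
  simp only [conjD]
  have hd : (Matrix.diagonal (fun i => ((f i : ℝ) : ℂ)) - Matrix.diagonal (fun i => ((g i : ℝ) : ℂ)))
      = Matrix.diagonal (fun i => (((f - g) i : ℝ) : ℂ)) := by
    rw [Matrix.diagonal_sub]
    exact congrArg Matrix.diagonal (funext fun i => by simp [Pi.sub_apply, Complex.ofReal_sub])
  rw [← Matrix.sub_mul, ← Matrix.mul_sub, hd]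

lemma conjD_rank_le : (conjD U f).rank ≤ (Finset.univ.filter (fun i => f i ≠ 0)).card := by
  refine le_trans (Matrix.rank_mul_le_left _ _) (le_trans (Matrix.rank_mul_le_right _ _) ?_)
  rw [Matrix.rank_diagonal]
  rw [Fintype.card_subtype]
  apply Finset.card_le_card
  intro i hi
  simp only [Finset.mem_filter, Finset.mem_univ, true_and] at *
  intro h0
  exact hi (by simp [h0])

lemma msqrt_conjD (hU : U ∈ Matrix.unitaryGroup ι ℂ) (hf : ∀ i, 0 ≤ f i) :
    msqrt (conjD U f) = conjD U (fun i => Real.sqrt (f i)) := by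
  refine msqrt_eq (conjD_psd _ hf) (conjD_psd _ fun i => Real.sqrt_nonneg _) ?_
  rw [pow_two, conjD_mul _ _ hU]
  exact congrArg (conjD U) (funext fun i => by
    simp only [Pi.mul_apply]
    exact Real.mul_self_sqrt (hf i))

end conjD

/-- Spectral decomposition of a PSD matrix, in `conjD` form. -/
lemma psd_spectral {A : Matrix ι ι ℂ} (hA : A.PosSemidef) :
    A = conjD (hA.1.eigenvectorUnitary : Matrix ι ι ℂ) hA.1.eigenvalues := by
  exact hA.1.spectral_theorem

/-! ### The combinatorial lemma -/

lemma exists_top_subset (lam : ι → ℝ) (k : ℕ) :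
    ∃ T : Finset ι, (T.card = k ∨ T = Finset.univ) ∧ T.card ≤ k ∧
      ∀ i ∉ T, ∀ j ∈ T, lam i ≤ lam j := by
  induction k with
  | zero => exact ⟨∅, Or.inl rfl, le_rfl, by simp⟩
  | succ k ih =>
    obtain ⟨T, hTk, hTle, hTtop⟩ := ih
    by_cases hTu : T = Finset.univ
    · exact ⟨T, Or.inr hTu, le_trans hTle (Nat.le_succ _), hTtop⟩
    · have hTk' : T.card = k := hTk.resolve_right hTu
      have hne : (Finset.univ \ T).Nonempty := by
        rw [Finset.sdiff_nonempty]
        intro hsub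
        exact hTu (Finset.univ_subset_iff.mp hsub)
      obtain ⟨i₀, hi₀mem, hi₀max⟩ := Finset.exists_max_image (Finset.univ \ T) lam hne
      have hi₀T : i₀ ∉ T := (Finset.mem_sdiff.mp hi₀mem).2
      refine ⟨insert i₀ T, Or.inl ?_, ?_, ?_⟩
      · rw [Finset.card_insert_of_notMem hi₀T, hTk']
      · rw [Finset.card_insert_of_notMem hi₀T, hTk']
      · intro i hi j hj
        have hiT : i ∉ T := fun h => hi (Finset.mem_insert_of_mem h)
        rcases Finset.mem_insert.mp hj with rfl | hjT
        · exact hi₀max i (Finset.mem_sdiff.mpr ⟨Finset.mem_univ _, hiT⟩)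
        · exact hTtop i hiT j hjT

lemma exists_good_subset (k : ℕ) (lam c : ι → ℝ) (hlam : ∀ i, 0 ≤ lam i)
    (hc0 : ∀ i, 0 ≤ c i) (hc1 : ∀ i, c i ≤ 1) (hsum : ∑ i, c i ≤ k) :
    ∃ T : Finset ι, T.card ≤ k ∧ ∑ i, c i * lam i ≤ ∑ i ∈ T, lam i := by
  obtain ⟨T, hTk, hTle, hTtop⟩ := exists_top_subset lam k
  refine ⟨T, hTle, ?_⟩
  rcases hTk with hTk | rfl
  swap
  · exact Finset.sum_le_sum fun i _ => by
      calc c i * lam i ≤ 1 * lam i := mul_le_mul_of_nonneg_right (hc1 i) (hlam i)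
        _ = lam i := one_mul _
  rcases Nat.eq_zero_or_pos k with rfl | hkpos
  · have hT0 : T = ∅ := Finset.card_eq_zero.mp hTk
    have hzero : ∀ i ∈ Finset.univ, c i = 0 := by
      have h0 : ∑ i, c i = 0 :=
        le_antisymm (by simpa using hsum) (Finset.sum_nonneg fun i _ => hc0 i)
      exact fun i hi =>
        (Finset.sum_eq_zero_iff_of_nonneg fun i _ => hc0 i).mp h0 i hi
    rw [hT0]
    simp only [Finset.sum_empty]
    exact le_of_eq (Finset.sum_eq_zero fun i hi => by rw [hzero i hi, zero_mul])
  · have hTne : T.Nonempty := Finset.card_pos.mp (hTk ▸ hkpos)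
    obtain ⟨j₀, hj₀T, hj₀min⟩ := Finset.exists_min_image T lam hTne
    set m := lam j₀ with hm
    have hm0 : 0 ≤ m := hlam j₀
    have hsplit : ∑ i, c i * lam i
        = ∑ i ∈ Finset.univ \ T, c i * lam i + ∑ i ∈ T, c i * lam i :=
      (Finset.sum_sdiff (Finset.subset_univ T)).symm
    have hcsplit : ∑ i ∈ Finset.univ \ T, c i
        = ∑ i, c i - ∑ i ∈ T, c i := by
      have := Finset.sum_sdiff (f := c) (Finset.subset_univ T)
      linarith [this]
    have h1 : ∑ i ∈ Finset.univ \ T, c i * lam i ≤ m * ∑ i ∈ Finset.univ \ T, c i := by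
      rw [Finset.mul_sum]
      refine Finset.sum_le_sum fun i hi => ?_
      have hiT : i ∉ T := (Finset.mem_sdiff.mp hi).2
      have : lam i ≤ m := hTtop i hiT j₀ hj₀T
      calc c i * lam i ≤ c i * m := mul_le_mul_of_nonneg_left this (hc0 i)
        _ = m * c i := mul_comm _ _
    have h2 : ∑ i ∈ Finset.univ \ T, c i ≤ ∑ j ∈ T, (1 - c j) := by
      have hs := Finset.sum_sdiff (f := c) (Finset.subset_univ T)
      have hTc : (T.card : ℝ) = (k : ℝ) := by exact_mod_cast hTk
      have hsub : ∑ j ∈ T, (1 - c j) = (T.card : ℝ) - ∑ j ∈ T, c j := by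
        rw [Finset.sum_sub_distrib]
        simp
      linarith
    have h3 : m * ∑ j ∈ T, (1 - c j) ≤ ∑ j ∈ T, lam j * (1 - c j) := by
      rw [Finset.mul_sum]
      refine Finset.sum_le_sum fun j hj => ?_
      exact mul_le_mul_of_nonneg_right (hj₀min j hj) (by linarith [hc1 j])
    have h2' : m * ∑ i ∈ Finset.univ \ T, c i ≤ m * ∑ j ∈ T, (1 - c j) :=
      mul_le_mul_of_nonneg_left h2 hm0
    have h4 : ∑ j ∈ T, lam j * (1 - c j) + ∑ i ∈ T, c i * lam i = ∑ j ∈ T, lam j := by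
      rw [← Finset.sum_add_distrib]
      exact Finset.sum_congr rfl fun j _ => by ring
    linarith

/-! ### The key fidelity bound -/

lemma fidelity_le_sqrt_trace {σ ρ Pr : Matrix ι ι ℂ} (hσ : σ.PosSemidef) (hσtr : σ.trace.re ≤ 1)
    (hρ : ρ.PosSemidef) (hPr2 : Pr * Pr = Pr) (hsupp : msqrt σ * Pr = msqrt σ)
    (hPrh : Pr.IsHermitian) :
    fidelity σ ρ ≤ Real.sqrt ((Pr * ρ).trace.re) := by
  classical
  set C := msqrt σ * msqrt ρ with hC
  have hCC : (Cᴴ * C).PosSemidef := Matrix.posSemidef_conjTranspose_mul_self C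
  have hfid : fidelity σ ρ = (psdSqrt hCC).trace.re := rfl
  set X := psdSqrt hCC with hXdef
  have hXpsd : X.PosSemidef := psdSqrt_psd hCC
  have hX2 : X * X = Cᴴ * C := psdSqrt_mul_self hCC
  set V : Matrix ι ι ℂ := (hXpsd.1.eigenvectorUnitary : Matrix ι ι ℂ) with hVdef
  have hVU : V ∈ Matrix.unitaryGroup ι ℂ := by rw [hVdef]; exact SetLike.coe_mem _
  set x : ι → ℝ := hXpsd.1.eigenvalues with hxdef
  have hx0 : ∀ i, 0 ≤ x i := hXpsd.eigenvalues_nonneg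
  have hXspec : X = conjD V x := psd_spectral hXpsd
  set d : ι → ℝ := fun i => if x i = 0 then 0 else (x i)⁻¹ with hddef
  set Xp : Matrix ι ι ℂ := conjD V d with hXpdef
  have hXpherm : Xpᴴ = Xp := conjD_herm d
  set W : Matrix ι ι ℂ := Xp * Cᴴ with hWdef
  have hWC : W * C = X := by
    calc W * C = Xp * (Cᴴ * C) := by rw [hWdef]; simp only [Matrix.mul_assoc]
      _ = Xp * (X * X) := by rw [hX2]
      _ = conjD V (d * (x * x)) := by
          rw [hXspec, hXpdef, conjD_mul _ _ hVU, conjD_mul _ _ hVU]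
      _ = conjD V x := by
          refine congrArg (conjD V) (funext fun i => ?_)
          by_cases h : x i = 0
          · simp [hddef, Pi.mul_apply, h]
          · simp only [hddef, Pi.mul_apply, h, if_false]
            field_simp
      _ = X := hXspec.symm
  have hWWW : W * Wᴴ * W = W := by
    have hWH : Wᴴ = C * Xp := by
      rw [hWdef, Matrix.conjTranspose_mul, Matrix.conjTranspose_conjTranspose, hXpherm]
    have hassoc : W * Wᴴ * W = Xp * (Cᴴ * C) * (Xp * Xp) * Cᴴ := by
      rw [hWdef, hWH]
      simp only [Matrix.mul_assoc]
    have hpt : (d * (x * x)) * (d * d) = d := by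
      funext i
      simp only [Pi.mul_apply]
      by_cases h : x i = 0
      · simp [hddef, h]
      · simp only [hddef, h, if_false]
        field_simp
    rw [hassoc, ← hX2, hXspec, hXpdef, conjD_mul _ _ hVU, conjD_mul _ _ hVU,
      conjD_mul _ _ hVU, conjD_mul _ _ hVU, hpt, hWdef, hXpdef]
  have hXsplit : X = (W * msqrt σ) * (Pr * msqrt ρ) := by
    have hstep : (W * msqrt σ) * (Pr * msqrt ρ) = W * C := by
      rw [hC]
      calc (W * msqrt σ) * (Pr * msqrt ρ) = W * ((msqrt σ * Pr) * msqrt ρ) := by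
            simp only [Matrix.mul_assoc]
        _ = W * (msqrt σ * msqrt ρ) := by rw [hsupp]
    rw [hstep, hWC]
  have hCS := trace_cs ((W * msqrt σ)ᴴ) (Pr * msqrt ρ)
  rw [Matrix.conjTranspose_conjTranspose, ← hXsplit] at hCS
  have hfac1 : ((W * msqrt σ) * (W * msqrt σ)ᴴ).trace.re ≤ 1 := by
    rw [Matrix.trace_mul_comm]
    have h1 : ((W * msqrt σ)ᴴ * (W * msqrt σ)).trace = ((Wᴴ * W) * σ).trace := by
      rw [Matrix.conjTranspose_mul, (msqrt_psd hσ).1]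
      calc (msqrt σ * Wᴴ * (W * msqrt σ)).trace
          = (msqrt σ * ((Wᴴ * W) * msqrt σ)).trace := by simp only [Matrix.mul_assoc]
        _ = ((Wᴴ * W) * msqrt σ * msqrt σ).trace := by
            rw [Matrix.trace_mul_comm]
        _ = ((Wᴴ * W) * σ).trace := by
            rw [Matrix.mul_assoc, msqrt_mul_self hσ]
    rw [h1]
    have hPpsd : (Wᴴ * W).PosSemidef := Matrix.posSemidef_conjTranspose_mul_self W
    have hP2 : (Wᴴ * W) * (Wᴴ * W) = Wᴴ * W := by
      calc (Wᴴ * W) * (Wᴴ * W) = Wᴴ * (W * Wᴴ * W) := by simp only [Matrix.mul_assoc]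
        _ = Wᴴ * W := by rw [hWWW]
    have hpos := psd_mul_trace_re_nonneg (one_sub_proj_psd hPpsd hP2) hσ
    have hsub : ((1 - Wᴴ * W) * σ).trace = σ.trace - ((Wᴴ * W) * σ).trace := by
      rw [Matrix.sub_mul, Matrix.one_mul, Matrix.trace_sub]
    rw [hsub] at hpos
    simp only [Complex.sub_re] at hpos
    linarith
  have hBfact : ((Pr * msqrt ρ)ᴴ * (Pr * msqrt ρ)).trace = (Pr * ρ).trace := by
    rw [Matrix.conjTranspose_mul, (msqrt_psd hρ).1, hPrh.eq]
    calc (msqrt ρ * Pr * (Pr * msqrt ρ)).trace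
        = (msqrt ρ * (Pr * Pr) * msqrt ρ).trace := by simp only [Matrix.mul_assoc]
      _ = (msqrt ρ * Pr * msqrt ρ).trace := by rw [hPr2]
      _ = (msqrt ρ * msqrt ρ * Pr).trace := by
          rw [Matrix.trace_mul_cycle]
      _ = (Pr * ρ).trace := by rw [msqrt_mul_self hρ, Matrix.trace_mul_comm]
  rw [hfid]
  calc X.trace.re
      ≤ Real.sqrt (((W * msqrt σ) * (W * msqrt σ)ᴴ).trace.re)
        * Real.sqrt (((Pr * msqrt ρ)ᴴ * (Pr * msqrt ρ)).trace.re) := hCS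
    _ ≤ 1 * Real.sqrt (((Pr * msqrt ρ)ᴴ * (Pr * msqrt ρ)).trace.re) :=
        mul_le_mul_of_nonneg_right (Real.sqrt_le_one.mpr hfac1) (Real.sqrt_nonneg _)
    _ = Real.sqrt ((Pr * ρ).trace.re) := by rw [one_mul, hBfact]

/-! ### Existence of a good projector for a single smoothing candidate -/

lemma purifiedDist_self {ρ : Matrix ι ι ℂ} (hρ : IsDensity ρ) : purifiedDist ρ ρ = 0 := by
  have hre : ρ.trace.re = 1 := by rw [hρ.2, Complex.one_re]
  have hfid : fidelity ρ ρ = 1 := by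
    rw [fidelity, msqrt_mul_self hρ.1, traceNorm_psd_eq hρ.1, hre]
  rw [purifiedDist, genFid, hfid, hre]
  norm_num

lemma H0_mono_rank {A B : Matrix ι ι ℂ} (h : A.rank ≤ B.rank) : H0 A ≤ H0 B := by
  rw [H0, H0]
  rcases Nat.eq_zero_or_pos A.rank with h0 | hpos
  · rw [h0]
    simp only [Nat.cast_zero, Real.logb_zero]
    rcases Nat.eq_zero_or_pos B.rank with h0' | hpos'
    · rw [h0']; simp
    · exact Real.logb_nonneg one_lt_two (by exact_mod_cast hpos')
  · refine Real.logb_le_logb_of_le one_lt_two (by exact_mod_cast hpos) (by exact_mod_cast h)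

lemma dist_bound_aux {e t : ℝ} (he : 0 ≤ e) (ht0 : 0 ≤ t) (ht1 : 1 - e ^ 2 ≤ t) :
    1 - t ^ 2 ≤ 4 * e := by
  rcases le_or_gt (1/2 : ℝ) e with hhalf | hhalf
  · nlinarith [sq_nonneg t]
  · have h1e : (0:ℝ) ≤ 1 - e ^ 2 := by nlinarith
    have hq : 0 ≤ (t - (1 - e ^ 2)) * (t + (1 - e ^ 2)) :=
      mul_nonneg (by linarith) (by linarith)
    have he2 : 0 ≤ e * (1 - 2 * e) := mul_nonneg he (by linarith)
    nlinarith [sq_nonneg (e ^ 2)]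

lemma exists_proj {ε : ℝ} (hε : 0 ≤ ε) {ρ σ : Matrix ι ι ℂ} (hρ : IsDensity ρ)
    (hσ : IsSubnormalized σ) (hd : purifiedDist σ ρ ≤ ε) :
    ∃ Q : Matrix ι ι ℂ, Q.PosSemidef ∧ (1 - Q).PosSemidef ∧ Q * ρ = ρ * Q ∧
      (Q * ρ * Q).rank ≤ σ.rank ∧ purifiedDist (Q * ρ * Q) ρ ≤ Real.sqrt (4 * ε) := by
  classical
  obtain ⟨hρpsd, hρtr⟩ := hρ
  obtain ⟨hσpsd, hσtr⟩ := hσ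
  have hρtrre : ρ.trace.re = 1 := by rw [hρtr, Complex.one_re]
  -- support projector of σ
  set V : Matrix ι ι ℂ := (hσpsd.1.eigenvectorUnitary : Matrix ι ι ℂ) with hVdef
  have hVU : V ∈ Matrix.unitaryGroup ι ℂ := by rw [hVdef]; exact SetLike.coe_mem _
  set mu : ι → ℝ := hσpsd.1.eigenvalues with hmudef
  have hmu0 : ∀ i, 0 ≤ mu i := hσpsd.eigenvalues_nonneg
  set chiS : ι → ℝ := fun i => if mu i ≠ 0 then 1 else 0 with hchiSdef
  set Pr : Matrix ι ι ℂ := conjD V chiS with hPrdef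
  have hPr2 : Pr * Pr = Pr := by
    rw [hPrdef, conjD_mul _ _ hVU]
    refine congrArg (conjD V) (funext fun i => ?_)
    simp only [Pi.mul_apply, hchiSdef]
    by_cases h : mu i ≠ 0 <;> simp [h]
  have hPrh : Pr.IsHermitian := conjD_herm _
  have hPrpsd : Pr.PosSemidef := conjD_psd _ (fun i => by
    simp only [hchiSdef]; by_cases h : mu i ≠ 0 <;> simp [h])
  have hsupp : msqrt σ * Pr = msqrt σ := by
    have hσspec : σ = conjD V mu := psd_spectral hσpsd
    have hms : msqrt σ = conjD V (fun i => Real.sqrt (mu i)) := by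
      conv_lhs => rw [hσspec]
      exact msqrt_conjD _ hVU hmu0
    rw [hms, hPrdef, conjD_mul _ _ hVU]
    refine congrArg (conjD V) (funext fun i => ?_)
    simp only [Pi.mul_apply, hchiSdef]
    by_cases h : mu i = 0
    · simp [h]
    · simp [h]
  have htrPr : Pr.trace.re = (σ.rank : ℝ) := by
    rw [hPrdef, conjD_trace_re _ hVU, hchiSdef]
    rw [Finset.sum_boole]
    rw [hσpsd.1.rank_eq_card_non_zero_eigs, Fintype.card_subtype]
  -- spectral data of ρ
  set U : Matrix ι ι ℂ := (hρpsd.1.eigenvectorUnitary : Matrix ι ι ℂ) with hUdef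
  have hUU : U ∈ Matrix.unitaryGroup ι ℂ := by rw [hUdef]; exact SetLike.coe_mem _
  set lam : ι → ℝ := hρpsd.1.eigenvalues with hlamdef
  have hlam0 : ∀ i, 0 ≤ lam i := hρpsd.eigenvalues_nonneg
  have hspec : ρ = conjD U lam := psd_spectral hρpsd
  -- the weights c i
  set M : Matrix ι ι ℂ := star U * Pr * U with hMdef
  have hMpsd : M.PosSemidef := by
    rw [hMdef, Matrix.star_eq_conjTranspose]
    exact hPrpsd.conjTranspose_mul_mul_same U
  have h1Mpsd : ((1 : Matrix ι ι ℂ) - M).PosSemidef := by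
    have h1P := one_sub_proj_psd hPrpsd hPr2
    have h2 := h1P.conjTranspose_mul_mul_same U
    have hUstar : Uᴴ * U = 1 := by
      rw [← Matrix.star_eq_conjTranspose]
      exact Matrix.mem_unitaryGroup_iff'.mp hUU
    have hexp : Uᴴ * (1 - Pr) * U = 1 - M := by
      rw [Matrix.mul_sub, Matrix.sub_mul, Matrix.mul_one, hMdef, Matrix.star_eq_conjTranspose,
        hUstar]
    rwa [hexp] at h2
  set c : ι → ℝ := fun i => (M i i).re with hcdef
  have hc0 : ∀ i, 0 ≤ c i := fun i => (Complex.nonneg_iff.mp (psd_diag_nonneg hMpsd i)).1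
  have hc1 : ∀ i, c i ≤ 1 := by
    intro i
    have := (Complex.nonneg_iff.mp (psd_diag_nonneg h1Mpsd i)).1
    rw [Matrix.sub_apply, Matrix.one_apply_eq, Complex.sub_re, Complex.one_re] at this
    simp only [hcdef]
    linarith
  have hsumc : ∑ i, c i = (σ.rank : ℝ) := by
    have h1 : M.trace = Pr.trace := by
      rw [hMdef, Matrix.trace_mul_cycle, Matrix.mem_unitaryGroup_iff.mp hUU, Matrix.one_mul]
    have h2 : ∑ i, c i = M.trace.re := by
      rw [Matrix.trace, Complex.re_sum]; rfl
    rw [h2, h1, htrPr]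
  have htrPrρ : (Pr * ρ).trace.re = ∑ i, c i * lam i := by
    have h1 : Pr * ρ = Pr * U * Matrix.diagonal (fun i => (lam i : ℂ)) * star U := by
      rw [hspec, conjD]
      simp only [Matrix.mul_assoc]
    have h2 : (Pr * ρ).trace = (M * Matrix.diagonal (fun i => (lam i : ℂ))).trace := by
      rw [h1, Matrix.trace_mul_cycle, hMdef]
      simp only [Matrix.mul_assoc]
    have h3 : (M * Matrix.diagonal (fun i => (lam i : ℂ))).trace = ∑ i, M i i * (lam i : ℂ) := by
      simp [Matrix.trace, Matrix.diag_apply, Matrix.mul_apply, Matrix.diagonal_apply,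
        Finset.sum_ite_eq, mul_ite]
    rw [h2, h3, Complex.re_sum]
    refine Finset.sum_congr rfl fun i _ => ?_
    rw [Complex.mul_re]
    simp [hcdef]
  -- fidelity bound
  have hfidle : fidelity σ ρ ≤ Real.sqrt ((Pr * ρ).trace.re) :=
    fidelity_le_sqrt_trace hσpsd hσtr hρpsd hPr2 hsupp hPrh
  -- combinatorial step
  obtain ⟨T, hTcard, hTsum⟩ := exists_good_subset σ.rank lam c hlam0 hc0 hc1 (le_of_eq hsumc)
  set chiT : ι → ℝ := fun i => if i ∈ T then 1 else 0 with hchiTdef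
  set nu : ι → ℝ := fun i => if i ∈ T then lam i else 0 with hnudef
  have hnu0 : ∀ i, 0 ≤ nu i := fun i => by
    simp only [hnudef]; by_cases h : i ∈ T <;> simp [h, hlam0 i]
  set Q : Matrix ι ι ℂ := conjD U chiT with hQdef
  have hQpsd : Q.PosSemidef := conjD_psd _ (fun i => by
    simp only [hchiTdef]; by_cases h : i ∈ T <;> simp [h])
  have hQ1psd : ((1 : Matrix ι ι ℂ) - Q).PosSemidef := by
    have h1 : (1 : Matrix ι ι ℂ) - Q = conjD U (fun i => 1 - chiT i) := by
      rw [← conjD_one hUU, hQdef, conjD_sub]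
      rfl
    rw [h1]
    exact conjD_psd _ (fun i => by
      simp only [hchiTdef]; by_cases h : i ∈ T <;> simp [h])
  have hcomm : Q * ρ = ρ * Q := by
    rw [hspec, hQdef, conjD_mul _ _ hUU, conjD_mul _ _ hUU, mul_comm]
  have hQρQ : Q * ρ * Q = conjD U nu := by
    rw [hspec, hQdef, conjD_mul _ _ hUU, conjD_mul _ _ hUU]
    refine congrArg (conjD U) (funext fun i => ?_)
    simp only [Pi.mul_apply, hchiTdef, hnudef]
    by_cases h : i ∈ T <;> simp [h]
  have hrank : (Q * ρ * Q).rank ≤ σ.rank := by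
    rw [hQρQ]
    refine le_trans (conjD_rank_le _) (le_trans ?_ hTcard)
    refine Finset.card_le_card fun i hi => ?_
    simp only [Finset.mem_filter, Finset.mem_univ, true_and, hnudef] at hi
    by_contra h
    exact hi (by simp [h])
  -- the trace weight t
  set t : ℝ := ∑ i ∈ T, lam i with htdef
  have hsumnu : ∑ i, nu i = t := by
    rw [htdef, hnudef]
    simp [Finset.sum_ite_mem, Finset.univ_inter]
  have ht0 : 0 ≤ t := Finset.sum_nonneg fun i _ => hlam0 i
  have hQρQtr : (Q * ρ * Q).trace.re = t := by
    rw [hQρQ, conjD_trace_re _ hUU, hsumnu]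
  have hfidQ : fidelity (Q * ρ * Q) ρ = t := by
    have hm1 : msqrt (Q * ρ * Q) = conjD U (fun i => Real.sqrt (nu i)) := by
      rw [hQρQ]; exact msqrt_conjD _ hUU hnu0
    have hm2 : msqrt ρ = conjD U (fun i => Real.sqrt (lam i)) := by
      conv_lhs => rw [hspec]
      exact msqrt_conjD _ hUU hlam0
    have hprod : msqrt (Q * ρ * Q) * msqrt ρ = conjD U nu := by
      rw [hm1, hm2, conjD_mul _ _ hUU]
      refine congrArg (conjD U) (funext fun i => ?_)
      simp only [Pi.mul_apply, hnudef]
      by_cases h : i ∈ T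
      · simp only [h, if_true]
        exact Real.mul_self_sqrt (hlam0 i)
      · simp [h]
    rw [fidelity, hprod, traceNorm_psd_eq (conjD_psd _ hnu0), conjD_trace_re _ hUU, hsumnu]
  -- purified distance of the compressed state
  have hPdist : purifiedDist (Q * ρ * Q) ρ = Real.sqrt (1 - t ^ 2) := by
    rw [purifiedDist, genFid, hfidQ, hρtrre, hQρQtr]
    norm_num
  -- lower bound on t
  have hgen : genFid σ ρ = fidelity σ ρ := by
    rw [genFid, hρtrre]
    norm_num
  have hFsq : 1 - (fidelity σ ρ) ^ 2 ≤ ε ^ 2 := by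
    rcases le_or_gt (1 - (genFid σ ρ) ^ 2) 0 with h | h
    · rw [← hgen]; nlinarith [sq_nonneg ε]
    · have h1 : purifiedDist σ ρ ^ 2 ≤ ε ^ 2 :=
        pow_le_pow_left₀ (Real.sqrt_nonneg _) hd 2
      rw [purifiedDist, Real.sq_sqrt (le_of_lt h)] at h1
      rw [← hgen]
      linarith
  have hF2t : (fidelity σ ρ) ^ 2 ≤ t := by
    have hPrρ0 : 0 ≤ (Pr * ρ).trace.re := psd_mul_trace_re_nonneg hPrpsd hρpsd
    have h1 : (fidelity σ ρ) ^ 2 ≤ (Pr * ρ).trace.re := by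
      have := pow_le_pow_left₀ (fidelity_nonneg σ ρ) hfidle 2
      rwa [Real.sq_sqrt hPrρ0] at this
    rw [htrPrρ] at h1
    linarith [hTsum]
  have ht1 : 1 - ε ^ 2 ≤ t := by linarith
  refine ⟨Q, hQpsd, hQ1psd, hcomm, hrank, ?_⟩
  rw [hPdist]
  exact Real.sqrt_le_sqrt (dist_bound_aux hε ht0 ht1)

end Aux


/-- The zero-Rényi entropy can be smoothed by applying a projection-like compression. -/
theorem smoothH0_by_projection (ε : ℝ) (hε : 0 ≤ ε) (ρ : Matrix ι ι ℂ) (hρ : IsDensity ρ) :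
    ∃ Q : Matrix ι ι ℂ, Q.PosSemidef ∧ (1 - Q).PosSemidef ∧ Q * ρ = ρ * Q ∧
      smoothH0 ε ρ ≥ H0 (Q * ρ * Q) ∧
      purifiedDist (Q * ρ * Q) ρ ≤ Real.sqrt (4 * ε) := by
  classical
  set S : Set ℝ :=
    {x : ℝ | ∃ σ : Matrix ι ι ℂ, IsSubnormalized σ ∧ purifiedDist σ ρ ≤ ε ∧ x = H0 σ} with hS
  have hstat : smoothH0 ε ρ = sInf S := rfl
  have hρsub : IsSubnormalized ρ := ⟨hρ.1, by rw [hρ.2, Complex.one_re]⟩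
  have hSne : S.Nonempty := ⟨H0 ρ, ρ, hρsub, by rw [purifiedDist_self hρ]; exact hε, rfl⟩
  have hSfin : S.Finite := by
    refine Set.Finite.subset (Set.Finite.image (fun k : ℕ => Real.logb 2 k)
      (Set.finite_Iic (Fintype.card ι))) ?_
    rintro x ⟨σ, -, -, rfl⟩
    exact ⟨σ.rank, Matrix.rank_le_card_width σ, rfl⟩
  obtain ⟨σ, hσsub, hσd, hval⟩ := hSne.csInf_mem hSfin
  obtain ⟨Q, hQpsd, hQ1psd, hcomm, hrank, hdist⟩ := exists_proj hε hρ hσsub hσd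
  refine ⟨Q, hQpsd, hQ1psd, hcomm, ?_, hdist⟩
  rw [ge_iff_le, hstat, hval]
  exact H0_mono_rank hrank

end QIT
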